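/- Let π be an (n,m)-piecewise affine permutation with principal product P ≠ 1 and principal sum S. For x ∈ [1,n] divisible by m, the length of the cycle of π containing x equals m·ord_{κ(x)}(P), where κ(x) = n(P−1)/gcd(n(P−1), x(P−1) + S) and ord_k(P) denotes the multiplicative order of P modulo k. -/

import Mathlib

/-- `psi k x` is the representative of `x` mod `k` in `[1, k]`. -/
def psi (k x : ℕ) : ℕ := if x % k = 0 then k else x % k

lemma psi_mem {n : ℕ} (hn : 0 < n) (z : ℕ) : psi n z ∈ Set.Icc 1 n := by
  unfold psi
  split
  · simp [hn]; omega
  · have := Nat.mod_lt z hn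
    simp only [Set.mem_Icc]; omega

lemma psi_modeq (n z : ℕ) : psi n z ≡ z [MOD n] := by
  unfold psi
  split <;> rename_i h
  · calc n ≡ 0 [MOD n] := (Nat.modEq_zero_iff_dvd).2 dvd_rfl
      _ ≡ z [MOD n] := by
        unfold Nat.ModEq; simp [h]
  · exact (Nat.mod_modEq z n)

lemma eq_of_modeq_Icc {n a b : ℕ} (ha : a ∈ Set.Icc 1 n) (hb : b ∈ Set.Icc 1 n)
    (h : a ≡ b [MOD n]) : a = b := by
  simp only [Set.mem_Icc] at ha hb
  rcases le_total a b with hle | hle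
  · have hd := (Nat.modEq_iff_dvd' hle).1 h
    rcases Nat.eq_zero_or_pos (b - a) with h0 | h0
    · omega
    · have := Nat.le_of_dvd h0 hd; omega
  · have hd := (Nat.modEq_iff_dvd' hle).1 h.symm
    rcases Nat.eq_zero_or_pos (a - b) with h0 | h0
    · omega
    · have := Nat.le_of_dvd h0 hd; omega

lemma psi_eq_m_iff {m z : ℕ} (hm : 0 < m) : psi m z = m ↔ m ∣ z := by
  unfold psi
  split <;> rename_i h
  · simp [Nat.dvd_of_mod_eq_zero h]
  · have := Nat.mod_lt z hm
    constructor
    · intro he; omega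
    · intro hd
      exact absurd (Nat.mod_eq_zero_of_dvd hd) h

lemma nat_geom {P : ℕ} (hP : 1 ≤ P) : ∀ k, (P - 1) * (∑ i ∈ Finset.range k, P ^ i) = P ^ k - 1 := by
  intro k
  induction k with
  | zero => simp
  | succ k ih =>
    rw [geom_sum_succ, Nat.mul_add, Nat.mul_one, mul_comm P, ← mul_assoc, ih,
      Nat.sub_mul, one_mul]
    have h1 : 1 ≤ P ^ k := Nat.one_le_pow _ _ hP
    have h2 : P ^ k * P = P ^ (k+1) := by ring
    have h3 : P ≤ P ^ k * P := Nat.le_mul_of_pos_left _ (by omega)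
    omega

/-- `π` is an `(n,m)`-piecewise affine permutation of `[1,n]` with parameters
`(a, b, c)`: it permutes `[1,n]` (and is the identity elsewhere), the entries of
`a, b` lie in `[1,n]`, the entries of `c` form a permutation of `[1,m]`, and for
`x ∈ [1,n]` with `Ψ_m(x) = c_i` one has `π(x) = Ψ_n(a_i x + b_i)` and
`Ψ_m(π(x)) = c_{i+1}`, indices cyclic modulo `m`. -/
def IsPAP (n m : ℕ) [NeZero m] (a b c : Fin m → ℕ) (π : ℕ → ℕ) : Prop :=
  Set.BijOn π (Set.Icc 1 n) (Set.Icc 1 n) ∧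
  (∀ x : ℕ, x ∉ Set.Icc 1 n → π x = x) ∧
  (∀ i, a i ∈ Set.Icc 1 n) ∧ (∀ i, b i ∈ Set.Icc 1 n) ∧
  (∀ i, c i ∈ Set.Icc 1 m) ∧ Function.Injective c ∧
  ∀ x ∈ Set.Icc 1 n, ∀ i, psi m x = c i →
    π x = psi n (a i * x + b i) ∧ psi m (π x) = c (i + 1)

open Fin.NatCast in
/-- If the principal product satisfies `P ≠ 1`, the cycle of `π` containing a
multiple `x` of `m` has length `m·ord_{κ(x)}(P)`, where
`κ(x) = n(P-1)/gcd(n(P-1), x(P-1)+S)`. -/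
theorem pap_cycle_length (n m : ℕ) [NeZero m] (hm : 1 < m) (hmn : m ∣ n)
    (a b c : Fin m → ℕ) (π : ℕ → ℕ) (hpap : IsPAP n m a b c π)
    (P S : ℕ) (hP : P = ∏ i, a i) (hSmem : S ∈ Set.Icc 1 n)
    (hS : ∀ x ∈ Set.Icc 1 n, m ∣ x → π^[m] x = psi n (P * x + S))
    (hP1 : P ≠ 1) :
    ∀ x ∈ Set.Icc 1 n, m ∣ x →
      Function.minimalPeriod π x =
        m * orderOf
          ((P : ZMod (n * (P - 1) / Nat.gcd (n * (P - 1)) (x * (P - 1) + S)))) := by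
  obtain ⟨hbij, hout, ha, hb, hc, hcinj, hstep⟩ := hpap
  intro x hx hxm
  have hSmem' := Set.mem_Icc.mp hSmem
  have hn : 0 < n := by omega
  have hmpos : 0 < m := by omega
  have hxmem := Set.mem_Icc.mp hx
  have hP1le : 1 ≤ P := by
    rw [hP]; exact Finset.one_le_prod' (fun i _ => (Set.mem_Icc.mp (ha i)).1)
  have hP2 : 2 ≤ P := by omega
  have hdpos : 0 < P - 1 := by omega
  -- c is surjective onto [1, m]
  have hcsurj : ∀ y ∈ Set.Icc 1 m, ∃ i, c i = y := by
    intro y hy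
    have himg : Finset.image c Finset.univ = Finset.Icc 1 m := by
      apply Finset.eq_of_subset_of_card_le
      · intro z hz
        simp only [Finset.mem_image] at hz
        obtain ⟨i, _, rfl⟩ := hz
        have := Set.mem_Icc.mp (hc i)
        simp only [Finset.mem_Icc]; omega
      · rw [Finset.card_image_of_injective _ hcinj, Finset.card_univ, Fintype.card_fin,
          Nat.card_Icc]
        omega
    have hy' : y ∈ Finset.image c Finset.univ := by
      rw [himg]; simp only [Finset.mem_Icc]
      exact Set.mem_Icc.mp hy
    simpa using hy'
  -- chain of residues
  have hchain : ∀ (y : ℕ), y ∈ Set.Icc 1 n → ∀ (i : Fin m), psi m y = c i →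
      ∀ j : ℕ, π^[j] y ∈ Set.Icc 1 n ∧ psi m (π^[j] y) = c (i + (j : Fin m)) := by
    intro y hy i hi j
    induction j with
    | zero => simpa using ⟨hy, hi⟩
    | succ j ih =>
      obtain ⟨hmem, hpsi⟩ := ih
      rw [Function.iterate_succ_apply']
      refine ⟨hbij.mapsTo hmem, ?_⟩
      rw [(hstep _ hmem _ hpsi).2]
      congr 1
      push_cast
      simp [add_assoc]
  -- π^[m] preserves [1,n] ∩ mℕ
  have hmdvd_iter : ∀ y ∈ Set.Icc 1 n, m ∣ y → π^[m] y ∈ Set.Icc 1 n ∧ m ∣ π^[m] y := by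
    intro y hy hdy
    obtain ⟨i0, hi0⟩ := hcsurj m (by simp only [Set.mem_Icc]; omega)
    have hpsiy : psi m y = c i0 := by rw [hi0]; exact (psi_eq_m_iff hmpos).2 hdy
    obtain ⟨hmem, hpsi⟩ := hchain y hy i0 hpsiy m
    refine ⟨hmem, ?_⟩
    rw [Fin.natCast_self, add_zero, hi0] at hpsi
    exact (psi_eq_m_iff hmpos).1 hpsi
  -- π is injective
  have hinj : Function.Injective π := by
    intro u v huv
    by_cases hu : u ∈ Set.Icc 1 n <;> by_cases hv : v ∈ Set.Icc 1 n
    · exact hbij.injOn hu hv huv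
    · exfalso; have h1 := hbij.mapsTo hu; rw [huv, hout v hv] at h1; exact hv h1
    · exfalso; have h1 := hbij.mapsTo hv; rw [← huv, hout u hu] at h1; exact hu h1
    · rw [hout u hu, hout v hv] at huv; exact huv
  -- iteration formula
  have hiter : ∀ k : ℕ, π^[m*k] x ∈ Set.Icc 1 n ∧ m ∣ π^[m*k] x ∧
      π^[m*k] x ≡ P^k * x + S * (∑ i ∈ Finset.range k, P ^ i) [MOD n] := by
    intro k
    induction k with
    | zero =>
      refine ⟨by simpa using hx, by simpa using hxm, ?_⟩
      simp [Nat.ModEq.refl]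
    | succ k ih =>
      obtain ⟨hmem, hdvd, hmod⟩ := ih
      have hrec : π^[m*(k+1)] x = π^[m] (π^[m*k] x) := by
        rw [show m*(k+1) = m + m*k by ring, Function.iterate_add_apply]
      obtain ⟨hmem', hdvd'⟩ := hmdvd_iter _ hmem hdvd
      rw [hrec]
      refine ⟨hmem', hdvd', ?_⟩
      rw [hS _ hmem hdvd]
      calc psi n (P * π^[m*k] x + S) ≡ P * π^[m*k] x + S [MOD n] := psi_modeq n _
        _ ≡ P * (P^k * x + S * ∑ i ∈ Finset.range k, P ^ i) + S [MOD n] :=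
            (hmod.mul_left P).add_right S
        _ = P^(k+1) * x + S * (∑ i ∈ Finset.range (k+1), P ^ i) := by
            rw [geom_sum_succ]; ring
  set t := x * (P - 1) + S with ht
  set N := n * (P - 1) with hN
  set g := Nat.gcd N t with hg
  set K := N / g with hK
  have htpos : 0 < t := by omega
  have hgpos : 0 < g := Nat.gcd_pos_of_pos_right _ htpos
  have hN2 : g * K = N := Nat.mul_div_cancel' (Nat.gcd_dvd_left N t)
  have ht2 : g * (t / g) = t := Nat.mul_div_cancel' (Nat.gcd_dvd_right N t)
  have hcop : Nat.Coprime K (t / g) := Nat.coprime_div_gcd_div_gcd hgpos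
  -- the arithmetic equivalence
  have harith : ∀ k : ℕ, (x ≡ P^k * x + S * (∑ i ∈ Finset.range k, P^i) [MOD n]) ↔
      (P : ZMod K)^k = 1 := by
    intro k
    have hPk : 1 ≤ P ^ k := Nat.one_le_pow _ _ (by omega)
    have h1 : x ≤ P^k * x := Nat.le_mul_of_pos_left x (by omega)
    have hx_le : x ≤ P^k * x + S * (∑ i ∈ Finset.range k, P^i) := by omega
    rw [Nat.modEq_iff_dvd' hx_le]
    have key : (P - 1) * (P^k * x + S * (∑ i ∈ Finset.range k, P^i) - x)
        = (P^k - 1) * t := by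
      have hg2 : ((∑ i ∈ Finset.range k, (P:ℤ)^i)) * ((P:ℤ) - 1) = (P:ℤ)^k - 1 :=
        geom_sum_mul _ _
      zify [hx_le, hPk, show 1 ≤ P from by omega, ht]
      push_cast
      linear_combination (S : ℤ) * hg2
    have step1 : (n ∣ P ^ k * x + S * (∑ i ∈ Finset.range k, P^i) - x) ↔
        N ∣ (P ^ k - 1) * t := by
      rw [← key, hN, mul_comm n (P-1), Nat.mul_dvd_mul_iff_left hdpos]
    have step2 : N ∣ (P^k - 1) * t ↔ K ∣ P^k - 1 := by
      have key2 : N ∣ (P^k - 1) * t ↔ K ∣ (P^k - 1) * (t/g) := by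
        conv_lhs => rw [← hN2, ← ht2]
        rw [mul_left_comm (P^k - 1) g (t/g), Nat.mul_dvd_mul_iff_left hgpos]
      rw [key2]
      constructor
      · intro h; exact hcop.dvd_of_dvd_mul_right h
      · intro h; exact h.mul_right _
    rw [step1, step2]
    have hcast : (P : ZMod K)^k = ((P^k : ℕ) : ZMod K) := by push_cast; ring
    rw [hcast, show (1 : ZMod K) = ((1:ℕ) : ZMod K) by simp, ZMod.natCast_eq_natCast_iff]
    constructor
    · intro h; exact ((Nat.modEq_iff_dvd' hPk).2 h).symm
    · intro h; exact (Nat.modEq_iff_dvd' hPk).1 h.symm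
  -- fixed point characterisation for π^[m]
  have hfix : ∀ k, Function.IsPeriodicPt π^[m] k x ↔ (P : ZMod K)^k = 1 := by
    intro k
    obtain ⟨hmem, hdvd, hmod⟩ := hiter k
    rw [← harith k]
    unfold Function.IsPeriodicPt Function.IsFixedPt
    rw [← Function.iterate_mul]
    constructor
    · intro he; rw [he] at hmod; exact hmod
    · intro he; exact eq_of_modeq_Icc hmem hx (hmod.trans he.symm)
  -- x is a periodic point of π
  have hper : x ∈ Function.periodicPts π := by
    have hmapsto : ∀ k : ℕ, π^[k] x ∈ Set.Icc 1 n := fun k => (hbij.mapsTo.iterate k) hx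
    have key3 : ∀ i j : ℕ, i < j → π^[i] x = π^[j] x → x ∈ Function.periodicPts π := by
      intro i j hij heq
      refine ⟨j - i, by omega, ?_⟩
      have h4 : π^[i] (π^[j-i] x) = π^[i] x := by
        rw [← Function.iterate_add_apply, show i + (j - i) = j by omega]
        exact heq.symm
      exact hinj.iterate i h4
    obtain ⟨i, hi, j, hj, hne, heq⟩ := Finset.exists_ne_map_eq_of_card_lt_of_maps_to
      (s := Finset.range (n+1)) (t := Finset.Icc 1 n) (f := fun k => π^[k] x)
      (by rw [Finset.card_range, Nat.card_Icc]; omega)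
      (fun k _ => by
        have := Set.mem_Icc.mp (hmapsto k)
        simp only [Finset.mem_coe, Finset.mem_Icc]; omega)
    rcases lt_or_gt_of_ne hne with h | h
    · exact key3 i j h heq
    · exact key3 j i h heq.symm
  set L := Function.minimalPeriod π x with hL
  have hLpos : 0 < L := Function.minimalPeriod_pos_of_mem_periodicPts hper
  have hLfix : π^[L] x = x := Function.iterate_minimalPeriod
  -- m divides L
  have hml : m ∣ L := by
    obtain ⟨i0, hi0⟩ := hcsurj m (by simp only [Set.mem_Icc]; omega)
    have hpsix : psi m x = c i0 := by rw [hi0]; exact (psi_eq_m_iff hmpos).2 hxm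
    have h5 := (hchain x hx i0 hpsix L).2
    rw [hLfix, hpsix] at h5
    have h6 : i0 = i0 + (L : Fin m) := hcinj h5
    have h0 : (L : Fin m) = 0 := by
      have := left_eq_add.mp h6
      exact this
    exact Fin.natCast_eq_zero.1 h0
  set T := Function.minimalPeriod π^[m] x with hTdef
  have hT : T = L / m := by
    rw [hTdef, Function.minimalPeriod_iterate_eq_div_gcd (show m ≠ 0 by omega), ← hL,
      Nat.gcd_eq_right hml]
  have hTpos : 0 < T := by
    rw [hT]; exact Nat.div_pos (Nat.le_of_dvd hLpos hml) hmpos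
  have hpowT : (P : ZMod K)^T = 1 := (hfix T).1 (Function.isPeriodicPt_minimalPeriod _ _)
  have h1 : orderOf (P : ZMod K) ∣ T := orderOf_dvd_of_pow_eq_one hpowT
  have h2 : T ∣ orderOf (P : ZMod K) :=
    Function.IsPeriodicPt.minimalPeriod_dvd ((hfix _).2 (pow_orderOf_eq_one _))
  have hTeq : T = orderOf (P : ZMod K) := Nat.dvd_antisymm h2 h1
  rw [← hTeq, hT]
  exact (Nat.mul_div_cancel' hml).symm
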